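/- Let $p_0$ and $p_1$ be uniformly continuous probability densities on $\mathbb{R}$ and $t \in [0,1]$, and set $p_t := (1-t)p_0 + t p_1$. Define, for any uniformly continuous density $q$, $i^*(q) := -\inf_{\psi \in \Psi_\downarrow(q)} D_q(\psi)$, where $\Psi_\downarrow(q)$ is the set of decreasing right-continuous $\psi$ with $\int \psi^2 q < \infty$ and $D_q(\psi) := \int_\mathbb{R} \psi^2 q + 2\int_{\mathcal{S}(q)} q\,d\psi$. Then $i^*(p_t) \leq (1-t)\, i^*(p_0) + t\, i^*(p_1)$; that is, $q \mapsto i^*(q)$ is convex. -/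

import Mathlib

open MeasureTheory

/-- The score-matching objective `D_q(ψ) = ∫ ψ² q + 2 ∫_{𝒮(q)} q dψ`, parametrized by
`ψ = -f` for a Stieltjes function `f` (so that `ψ` is decreasing and right-continuous and
the Lebesgue–Stieltjes integral `∫_{𝒮(q)} q dψ` equals `-∫_{𝒮(q)} q dμ_f`), with values
in `EReal` (it may be `-∞`). Here `𝒮(q)` is the interior of the convex hull of the
support of `q`. -/
noncomputable def scoreObj (q : ℝ → ℝ) (f : StieltjesFunction ℝ) : EReal :=
  ((∫ z, (f z) ^ 2 * q z : ℝ) : EReal)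
    - 2 * ((∫⁻ z in interior (convexHull ℝ {z | 0 < q z}),
        ENNReal.ofReal (q z) ∂f.measure : ENNReal) : EReal)

/-- The antitonic information `i*(q) = - inf_{ψ ∈ Ψ↓(q)} D_q(ψ)`, where `Ψ↓(q)` is the set
of decreasing right-continuous `ψ` with `∫ ψ² q < ∞`. -/
noncomputable def antitonicInfo (q : ℝ → ℝ) : EReal :=
  - sInf (scoreObj q '' {f : StieltjesFunction ℝ | Integrable (fun z => (f z) ^ 2 * q z)})

/- ### Auxiliary lemmas -/

lemma ereal_coe_mul_ne_bot {c : ℝ} (hc : 0 < c) {x : EReal} (hx : x ≠ ⊥) :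
    (c : EReal) * x ≠ ⊥ := by
  induction x with
  | bot => exact absurd rfl hx
  | coe r => rw [← EReal.coe_mul]; exact EReal.coe_ne_bot _
  | top =>
      rw [EReal.mul_comm, EReal.top_mul_of_pos (by exact_mod_cast hc)]
      exact top_ne_bot

/-- A set lintegral of `ofReal ∘ p` over a measurable set containing `{0 < p}` equals the
full lintegral. -/
lemma setLIntegral_of_support_subset (f : StieltjesFunction ℝ) (p : ℝ → ℝ)
    (hp : ∀ z, 0 ≤ p z) {A : Set ℝ} (hA : MeasurableSet A)
    (hsub : {z | 0 < p z} ⊆ A) :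
    ∫⁻ z in A, ENNReal.ofReal (p z) ∂f.measure = ∫⁻ z, ENNReal.ofReal (p z) ∂f.measure := by
  rw [← lintegral_indicator hA]
  congr 1
  refine (Set.indicator_eq_self.2 ?_)
  intro z hz
  refine hsub ?_
  simp only [Function.mem_support, ne_eq, ENNReal.ofReal_eq_zero, not_le] at hz
  exact hz

/-- The zero Stieltjes function is in the admissible class, and its objective is `0`;
hence the infimum is at most `0`. -/
lemma sInf_scoreObj_le_zero (q : ℝ → ℝ) :
    sInf (scoreObj q '' {f : StieltjesFunction ℝ | Integrable (fun z => (f z) ^ 2 * q z)})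
      ≤ 0 := by
  have hmem : (0 : StieltjesFunction ℝ) ∈
      {f : StieltjesFunction ℝ | Integrable (fun z => (f z) ^ 2 * q z)} := by
    have : (fun z => ((0 : StieltjesFunction ℝ) z) ^ 2 * q z) = fun _ => (0:ℝ) := by
      funext z
      show ((StieltjesFunction.const (R := ℝ) 0) z) ^ 2 * q z = 0
      simp
    simpa [Set.mem_setOf_eq, this] using (integrable_zero ℝ ℝ (volume : Measure ℝ))
  refine (sInf_le (Set.mem_image_of_mem _ hmem)).trans_eq ?_
  have h1 : (fun z => ((0 : StieltjesFunction ℝ) z) ^ 2 * q z) = fun _ => (0:ℝ) := by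
    funext z
    show ((StieltjesFunction.const (R := ℝ) 0) z) ^ 2 * q z = 0
    simp
  have h2 : (0 : StieltjesFunction ℝ).measure = 0 := StieltjesFunction.measure_const 0
  simp [scoreObj, h1, h2]

lemma sInf_scoreObj_ne_top (q : ℝ → ℝ) :
    sInf (scoreObj q '' {f : StieltjesFunction ℝ | Integrable (fun z => (f z) ^ 2 * q z)})
      ≠ ⊤ :=
  fun h => by simpa [h] using sInf_scoreObj_le_zero q

/-- Integrability transfers from the mixture to a component. -/
lemma integrable_component {c0 c1 : ℝ} (hc0 : 0 < c0) (hc1 : 0 ≤ c1)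
    (p0 p1 : ℝ → ℝ) (h0c : Continuous p0) (h0n : ∀ z, 0 ≤ p0 z) (h1n : ∀ z, 0 ≤ p1 z)
    (f : StieltjesFunction ℝ)
    (h : Integrable (fun z => (f z) ^ 2 * (c0 * p0 z + c1 * p1 z))) :
    Integrable (fun z => (f z) ^ 2 * p0 z) := by
  have hm : Measurable fun z => (f z) ^ 2 * p0 z :=
    ((f.mono.measurable).pow_const 2).mul h0c.measurable
  refine Integrable.mono' (h.const_mul c0⁻¹) hm.aestronglyMeasurable
    (Filter.Eventually.of_forall fun z => ?_)
  rw [Real.norm_of_nonneg (mul_nonneg (sq_nonneg _) (h0n z))]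
  have key : c0 * ((f z) ^ 2 * p0 z) ≤ (f z) ^ 2 * (c0 * p0 z + c1 * p1 z) := by
    nlinarith [sq_nonneg (f z), mul_nonneg (mul_nonneg hc1 (sq_nonneg (f z))) (h1n z)]
  calc (f z) ^ 2 * p0 z = c0⁻¹ * (c0 * ((f z) ^ 2 * p0 z)) := by field_simp
    _ ≤ c0⁻¹ * ((f z) ^ 2 * (c0 * p0 z + c1 * p1 z)) :=
        mul_le_mul_of_nonneg_left key (by positivity)

lemma ereal_neg_combo_le {c0 c1 : ℝ} (hc0 : 0 < c0) (hc1 : 0 < c1) {a b : EReal}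
    (ha : a ≠ ⊤) (hb : b ≠ ⊤) :
    -((c0 : EReal) * a + (c1 : EReal) * b) ≤ (c0 : EReal) * (-a) + (c1 : EReal) * (-b) := by
  have hnb : ∀ {x : EReal}, x ≠ ⊤ → -x ≠ ⊥ := by
    intro x hx h
    exact hx (by rw [← neg_neg x, h, EReal.neg_bot])
  have htop : ∀ {c : ℝ}, 0 < c → (c : EReal) * ⊤ = ⊤ := by
    intro c hcpos
    rw [EReal.mul_comm]
    exact EReal.top_mul_of_pos (by exact_mod_cast hcpos)
  induction a with
  | top => exact absurd rfl ha
  | bot =>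
      rw [EReal.coe_mul_bot_of_pos hc0, EReal.bot_add, EReal.neg_bot, htop hc0,
        EReal.top_add_of_ne_bot (ereal_coe_mul_ne_bot hc1 (hnb hb))]
  | coe r =>
      induction b with
      | top => exact absurd rfl hb
      | bot =>
          rw [EReal.coe_mul_bot_of_pos hc1, EReal.add_bot, EReal.neg_bot, htop hc1,
            EReal.add_top_of_ne_bot (ereal_coe_mul_ne_bot hc0 (hnb ha))]
      | coe s =>
          refine le_of_eq ?_
          rw [← EReal.coe_neg, ← EReal.coe_neg, ← EReal.coe_mul, ← EReal.coe_mul,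
            ← EReal.coe_mul, ← EReal.coe_mul, ← EReal.coe_add, ← EReal.coe_add,
            ← EReal.coe_neg, EReal.coe_eq_coe_iff]
          ring

/-- Convexity of the antitonic information: for uniformly continuous densities `p₀, p₁` and
`t ∈ [0,1]`, `i*((1-t)p₀ + t p₁) ≤ (1-t) i*(p₀) + t i*(p₁)`. -/
theorem stmt18 (p0 p1 : ℝ → ℝ) (t : ℝ) (ht : t ∈ Set.Icc (0:ℝ) 1)
    (h0u : UniformContinuous p0) (h1u : UniformContinuous p1)
    (h0n : ∀ z, 0 ≤ p0 z) (h1n : ∀ z, 0 ≤ p1 z)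
    (h0i : ∫ z, p0 z = 1) (h1i : ∫ z, p1 z = 1) :
    antitonicInfo (fun z => (1 - t) * p0 z + t * p1 z)
      ≤ ((1 - t : ℝ) : EReal) * antitonicInfo p0 + ((t : ℝ) : EReal) * antitonicInfo p1 := by
  obtain ⟨ht0, ht1⟩ := ht
  rcases eq_or_lt_of_le ht0 with h|hc1t
  · subst h
    norm_num
  rcases eq_or_lt_of_le ht1 with h|hc0'
  · subst h
    norm_num
  -- main case : 0 < t < 1
  set c0 : ℝ := 1 - t with hc0def
  set c1 : ℝ := t with hc1def
  have hc0 : 0 < c0 := by rw [hc0def]; linarith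
  have hc1 : 0 < c1 := hc1t
  set pt : ℝ → ℝ := fun z => c0 * p0 z + c1 * p1 z with hptdef
  have h0c : Continuous p0 := h0u.continuous
  have h1c : Continuous p1 := h1u.continuous
  have hptc : Continuous pt := ((continuous_const.mul h0c).add (continuous_const.mul h1c))
  have hptn : ∀ z, 0 ≤ pt z := fun z =>
    add_nonneg (mul_nonneg hc0.le (h0n z)) (mul_nonneg hc1.le (h1n z))
  set A0 := interior (convexHull ℝ {z | 0 < p0 z}) with hA0def
  set A1 := interior (convexHull ℝ {z | 0 < p1 z}) with hA1def
  set At := interior (convexHull ℝ {z | 0 < pt z}) with hAtdef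
  have hA0m : MeasurableSet A0 := isOpen_interior.measurableSet
  have hA1m : MeasurableSet A1 := isOpen_interior.measurableSet
  have hAtm : MeasurableSet At := isOpen_interior.measurableSet
  have hsub0 : {z | 0 < p0 z} ⊆ A0 :=
    interior_maximal (subset_convexHull ℝ _) (isOpen_lt continuous_const h0c)
  have hsub1 : {z | 0 < p1 z} ⊆ A1 :=
    interior_maximal (subset_convexHull ℝ _) (isOpen_lt continuous_const h1c)
  have hsubt0 : {z | 0 < p0 z} ⊆ At := by
    refine interior_maximal (Set.Subset.trans ?_ (subset_convexHull ℝ _))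
      (isOpen_lt continuous_const h0c)
    intro z hz
    exact lt_of_lt_of_le (mul_pos hc0 hz)
      (le_add_of_nonneg_right (mul_nonneg hc1.le (h1n z)))
  have hsubt1 : {z | 0 < p1 z} ⊆ At := by
    refine interior_maximal (Set.Subset.trans ?_ (subset_convexHull ℝ _))
      (isOpen_lt continuous_const h1c)
    intro z hz
    exact lt_of_lt_of_le (mul_pos hc1 hz)
      (le_add_of_nonneg_left (mul_nonneg hc0.le (h0n z)))
  set S0 := {f : StieltjesFunction ℝ | Integrable (fun z => (f z) ^ 2 * p0 z)} with hS0def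
  set S1 := {f : StieltjesFunction ℝ | Integrable (fun z => (f z) ^ 2 * p1 z)} with hS1def
  set St := {f : StieltjesFunction ℝ | Integrable (fun z => (f z) ^ 2 * pt z)} with hStdef
  have hmem0 : ∀ f ∈ St, f ∈ S0 := fun f hf =>
    integrable_component hc0 hc1.le p0 p1 h0c h0n h1n f hf
  have hmem1 : ∀ f ∈ St, f ∈ S1 := by
    intro f hf
    refine integrable_component hc1 hc0.le p1 p0 h1c h1n h0n f ?_
    have : (fun z => (f z) ^ 2 * (c1 * p1 z + c0 * p0 z))
        = fun z => (f z) ^ 2 * pt z := by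
      funext z; rw [hptdef]; ring
    rw [this]; exact hf
  -- the key decomposition of the objective
  have h2top : (2 : EReal) * (⊤ : EReal) = ⊤ := by
    rw [EReal.mul_comm]; exact EReal.top_mul_of_pos (by norm_num)
  have key : ∀ f ∈ St,
      scoreObj pt f = (c0 : EReal) * scoreObj p0 f + (c1 : EReal) * scoreObj p1 f := by
    intro f hf
    have hf0 : Integrable (fun z => (f z) ^ 2 * p0 z) := hmem0 f hf
    have hf1 : Integrable (fun z => (f z) ^ 2 * p1 z) := hmem1 f hf
    set L0 := ∫⁻ z in A0, ENNReal.ofReal (p0 z) ∂f.measure with hL0def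
    set L1 := ∫⁻ z in A1, ENNReal.ofReal (p1 z) ∂f.measure with hL1def
    have hInt : ∫ z, (f z) ^ 2 * pt z
        = c0 * (∫ z, (f z) ^ 2 * p0 z) + c1 * (∫ z, (f z) ^ 2 * p1 z) := by
      have e : (fun z => (f z) ^ 2 * pt z)
          = fun z => c0 * ((f z) ^ 2 * p0 z) + c1 * ((f z) ^ 2 * p1 z) := by
        funext z; rw [hptdef]; ring
      rw [e, integral_add (hf0.const_mul _) (hf1.const_mul _),
        integral_const_mul, integral_const_mul]
    have hL : (∫⁻ z in At, ENNReal.ofReal (pt z) ∂f.measure)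
        = ENNReal.ofReal c0 * L0 + ENNReal.ofReal c1 * L1 := by
      have e1 : ∀ z, ENNReal.ofReal (pt z)
          = ENNReal.ofReal c0 * ENNReal.ofReal (p0 z)
            + ENNReal.ofReal c1 * ENNReal.ofReal (p1 z) := by
        intro z
        rw [← ENNReal.ofReal_mul hc0.le, ← ENNReal.ofReal_mul hc1.le,
          ← ENNReal.ofReal_add (mul_nonneg hc0.le (h0n z)) (mul_nonneg hc1.le (h1n z))]
      simp_rw [e1]
      rw [lintegral_add_left (h0c.measurable.ennreal_ofReal.const_mul _),
        lintegral_const_mul _ h0c.measurable.ennreal_ofReal,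
        lintegral_const_mul _ h1c.measurable.ennreal_ofReal,
        setLIntegral_of_support_subset f p0 h0n hAtm hsubt0,
        setLIntegral_of_support_subset f p1 h1n hAtm hsubt1,
        hL0def, hL1def,
        setLIntegral_of_support_subset f p0 h0n hA0m hsub0,
        setLIntegral_of_support_subset f p1 h1n hA1m hsub1]
    simp only [scoreObj]
    rw [← hA0def, ← hA1def, ← hAtdef, ← hL0def, ← hL1def, hInt, hL]
    rcases eq_or_ne L0 ⊤ with h0top | h0top
    · have hne : ENNReal.ofReal c0 ≠ 0 := by
        simp only [ne_eq, ENNReal.ofReal_eq_zero, not_le]; exact hc0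
      rw [h0top, ENNReal.mul_top hne, top_add, EReal.coe_ennreal_top, h2top,
        sub_eq_add_neg, EReal.neg_top, EReal.add_bot, sub_eq_add_neg, EReal.neg_top,
        EReal.add_bot, EReal.coe_mul_bot_of_pos hc0, EReal.bot_add]
    rcases eq_or_ne L1 ⊤ with h1top | h1top
    · have hne : ENNReal.ofReal c1 ≠ 0 := by
        simp only [ne_eq, ENNReal.ofReal_eq_zero, not_le]; exact hc1
      rw [h1top, ENNReal.mul_top hne, add_top, EReal.coe_ennreal_top, h2top,
        sub_eq_add_neg, EReal.neg_top, EReal.add_bot]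
      rw [sub_eq_add_neg ((∫ z, (f z) ^ 2 * p1 z : ℝ) : EReal), EReal.neg_top,
        EReal.add_bot, EReal.coe_mul_bot_of_pos hc1, EReal.add_bot]
    · -- both finite
      have hm0 : ENNReal.ofReal c0 * L0 ≠ ⊤ := ENNReal.mul_ne_top ENNReal.ofReal_ne_top h0top
      have hm1 : ENNReal.ofReal c1 * L1 ≠ ⊤ := ENNReal.mul_ne_top ENNReal.ofReal_ne_top h1top
      have hsum : ENNReal.ofReal c0 * L0 + ENNReal.ofReal c1 * L1 ≠ ⊤ :=
        ENNReal.add_ne_top.2 ⟨hm0, hm1⟩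
      have ecast : ∀ {L : ENNReal}, L ≠ ⊤ → (L : EReal) = ((L.toReal : ℝ) : EReal) := by
        intro L hL
        conv_lhs => rw [← ENNReal.ofReal_toReal hL]
        rw [EReal.coe_ennreal_ofReal, max_eq_left ENNReal.toReal_nonneg]
      have htr : (ENNReal.ofReal c0 * L0 + ENNReal.ofReal c1 * L1).toReal
          = c0 * L0.toReal + c1 * L1.toReal := by
        rw [ENNReal.toReal_add hm0 hm1, ENNReal.toReal_mul, ENNReal.toReal_mul,
          ENNReal.toReal_ofReal hc0.le, ENNReal.toReal_ofReal hc1.le]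
      rw [ecast hsum, ecast h0top, ecast h1top, htr]
      rw [show ((2:EReal)) = ((2:ℝ):EReal) from rfl]
      simp only [← EReal.coe_mul, ← EReal.coe_sub, ← EReal.coe_add, EReal.coe_eq_coe_iff]
      ring
  -- assemble
  simp only [antitonicInfo]
  rw [← hS0def, ← hS1def, ← hStdef]
  set i0 := sInf (scoreObj p0 '' S0) with hi0def
  set i1 := sInf (scoreObj p1 '' S1) with hi1def
  have hi0top : i0 ≠ ⊤ := sInf_scoreObj_ne_top p0
  have hi1top : i1 ≠ ⊤ := sInf_scoreObj_ne_top p1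
  have hmain : (c0 : EReal) * i0 + (c1 : EReal) * i1 ≤ sInf (scoreObj pt '' St) := by
    refine le_sInf ?_
    rintro x ⟨f, hf, rfl⟩
    rw [key f hf]
    refine add_le_add
      (mul_le_mul_of_nonneg_left (sInf_le (Set.mem_image_of_mem _ (hmem0 f hf)))
        (by exact_mod_cast hc0.le))
      (mul_le_mul_of_nonneg_left (sInf_le (Set.mem_image_of_mem _ (hmem1 f hf)))
        (by exact_mod_cast hc1.le))
  calc -sInf (scoreObj pt '' St) ≤ -((c0 : EReal) * i0 + (c1 : EReal) * i1) :=
        EReal.neg_le_neg_iff.2 hmain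
    _ ≤ (c0 : EReal) * (-i0) + (c1 : EReal) * (-i1) :=
        ereal_neg_combo_le hc0 hc1 hi0top hi1top
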